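/- Let c > 0 and let X be a random variable with density f_c(ρ) = (c/(2√π))·ρ^{−3/2}·exp(−c²/(4ρ)) on (0,∞); let h be an exponential random variable with rate λ > 0, independent of X; let K > 0 and a, b > 0. Define B = P[ h > K/X and X > a ] and O_STP = B·P[X ≤ a] + (1 − B)·P[X ≤ b]. Then O_STP = ( ∫_a^∞ exp(−λK/ρ)·f_c(ρ) dρ )·( erfc(c/(2√a)) − erfc(c/(2√b)) ) + erfc(c/(2√b)). -/

import Mathlib

open MeasureTheory ProbabilityTheory Set

/-- The complementary error function `erfc(x) = (2/√π)·∫_x^∞ exp(−t²) dt`. -/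
noncomputable def erfc (x : ℝ) : ℝ :=
  (2 / Real.sqrt Real.pi) * ∫ t in Ioi x, Real.exp (-t ^ 2)

/-- The Lévy-type density on `(0,∞)`: `f_c(ρ) = (c/(2√π))·ρ^{−3/2}·exp(−c²/(4ρ))`. -/
noncomputable def levyDensity (c ρ : ℝ) : ℝ :=
  c / (2 * Real.sqrt Real.pi) * ρ ^ (-(3 : ℝ) / 2) * Real.exp (-(c ^ 2 / (4 * ρ)))

open Filter Topology

lemma integrable_exp_neg_sq : MeasureTheory.Integrable (fun t : ℝ => Real.exp (-t ^ 2)) := by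
  have := integrable_exp_neg_mul_sq (b := 1) one_pos
  simpa using this

lemma erfc_zero : erfc 0 = 1 := by
  have h : ∫ t in Ioi (0:ℝ), Real.exp (-t ^ 2) = Real.sqrt (Real.pi / 1) / 2 := by
    have := integral_gaussian_Ioi 1
    simpa using this
  rw [erfc, h]
  have hπ : 0 < Real.sqrt Real.pi := Real.sqrt_pos.2 Real.pi_pos
  field_simp

lemma erfc_eq (x : ℝ) (hx : 0 ≤ x) :
    erfc x = (2 / Real.sqrt Real.pi) *
      ((∫ t in Ioi (0:ℝ), Real.exp (-t ^ 2)) - ∫ t in (0:ℝ)..x, Real.exp (-t ^ 2)) := by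
  rw [erfc]
  congr 1
  have hsplit : Ioc (0:ℝ) x ∪ Ioi x = Ioi 0 := Ioc_union_Ioi_eq_Ioi hx
  have hd : Disjoint (Ioc (0:ℝ) x) (Ioi x) := by
    simp [Set.disjoint_left]
  have := setIntegral_union hd measurableSet_Ioi
    (integrable_exp_neg_sq.integrableOn) (integrable_exp_neg_sq.integrableOn)
  rw [hsplit] at this
  rw [intervalIntegral.integral_of_le hx, this]
  ring

lemma cont_exp_neg_sq : Continuous (fun t : ℝ => Real.exp (-t ^ 2)) := by continuity

noncomputable def prim (x : ℝ) : ℝ := ∫ t in (0:ℝ)..x, Real.exp (-t ^ 2)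

lemma prim_hasDerivAt (x : ℝ) : HasDerivAt prim (Real.exp (-x ^ 2)) x :=
  intervalIntegral.integral_hasDerivAt_right
    (cont_exp_neg_sq.intervalIntegrable _ _)
    (cont_exp_neg_sq.stronglyMeasurableAtFilter _ _)
    cont_exp_neg_sq.continuousAt

lemma prim_continuous : Continuous prim := by
  have : Differentiable ℝ prim := fun x => (prim_hasDerivAt x).differentiableAt
  exact this.continuous

lemma erfc_hasDerivAt {x : ℝ} (hx : 0 < x) :
    HasDerivAt erfc (-(2 / Real.sqrt Real.pi) * Real.exp (-x ^ 2)) x := by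
  have heq : erfc =ᶠ[𝓝 x] fun y =>
      (2 / Real.sqrt Real.pi) * ((∫ t in Ioi (0:ℝ), Real.exp (-t ^ 2)) - prim y) := by
    filter_upwards [eventually_gt_nhds hx] with y hy
    exact erfc_eq y hy.le
  have h : HasDerivAt (fun y => (2 / Real.sqrt Real.pi) *
      ((∫ t in Ioi (0:ℝ), Real.exp (-t ^ 2)) - prim y))
      (-(2 / Real.sqrt Real.pi) * Real.exp (-x ^ 2)) x := by
    have := ((prim_hasDerivAt x).const_sub (∫ t in Ioi (0:ℝ), Real.exp (-t ^ 2))).const_mul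
      (2 / Real.sqrt Real.pi)
    refine this.congr_deriv ?_
    ring
  exact h.congr_of_eventuallyEq heq

lemma erfc_tendsto_zero_right : Tendsto erfc (𝓝[≥] 0) (𝓝 1) := by
  have h1 : Tendsto (fun y => (2 / Real.sqrt Real.pi) *
      ((∫ t in Ioi (0:ℝ), Real.exp (-t ^ 2)) - prim y)) (𝓝[≥] 0) (𝓝 (erfc 0)) := by
    have hc : Continuous (fun y => (2 / Real.sqrt Real.pi) *
        ((∫ t in Ioi (0:ℝ), Real.exp (-t ^ 2)) - prim y)) :=
      continuous_const.mul (continuous_const.sub prim_continuous)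
    have := hc.continuousAt (x := (0:ℝ)).tendsto
    have h0 : (2 / Real.sqrt Real.pi) *
        ((∫ t in Ioi (0:ℝ), Real.exp (-t ^ 2)) - prim 0) = erfc 0 := by
      simp [prim, erfc]
    rw [← h0]
    exact this.mono_left nhdsWithin_le_nhds
  rw [← erfc_zero]
  refine h1.congr' ?_
  filter_upwards [self_mem_nhdsWithin] with y hy
  exact (erfc_eq y hy).symm

lemma rpow_neg_three_half {ρ : ℝ} (hρ : 0 < ρ) :
    ρ ^ (-(3:ℝ)/2) = (ρ * Real.sqrt ρ)⁻¹ := by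
  have : (-(3:ℝ)/2) = (-1) + (-(1/2)) := by norm_num
  rw [this, Real.rpow_add hρ, Real.rpow_neg_one, Real.rpow_neg hρ.le,
    ← Real.sqrt_eq_rpow, mul_inv]

lemma G_hasDerivAt (c : ℝ) (hc : 0 < c) {ρ : ℝ} (hρ : 0 < ρ) :
    HasDerivAt (fun y => erfc (c / (2 * Real.sqrt y))) (levyDensity c ρ) ρ := by
  have hsρ : 0 < Real.sqrt ρ := Real.sqrt_pos.2 hρ
  have hs := Real.hasDerivAt_sqrt hρ.ne'
  have hg : HasDerivAt (fun y => 2 * Real.sqrt y) (2 * (1 / (2 * Real.sqrt ρ))) ρ :=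
    hs.const_mul 2
  have hu : HasDerivAt (fun y => c / (2 * Real.sqrt y))
      ((0 * (2 * Real.sqrt ρ) - c * (2 * (1 / (2 * Real.sqrt ρ)))) / (2 * Real.sqrt ρ) ^ 2) ρ :=
    (hasDerivAt_const ρ c).div hg (by positivity)
  have huval : 0 < c / (2 * Real.sqrt ρ) := by positivity
  have hE := erfc_hasDerivAt huval
  have hcomp := hE.comp ρ hu
  refine hcomp.congr_deriv ?_
  symm
  have hsq : (c / (2 * Real.sqrt ρ)) ^ 2 = c ^ 2 / (4 * ρ) := by
    rw [div_pow, mul_pow, Real.sq_sqrt hρ.le]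
    norm_num
  rw [levyDensity, rpow_neg_three_half hρ, hsq]
  have h2 : Real.sqrt ρ ^ 2 = ρ := Real.sq_sqrt hρ.le
  have hπ : Real.sqrt Real.pi ≠ 0 := ne_of_gt (Real.sqrt_pos.2 Real.pi_pos)
  field_simp
  ring_nf
  have h3 : Real.sqrt ρ ^ 3 = ρ * Real.sqrt ρ := by rw [pow_succ, h2]
  rw [h2]


lemma G_tendsto (c : ℝ) (hc : 0 < c) :
    Tendsto (fun ρ => erfc (c / (2 * Real.sqrt ρ))) atTop (𝓝 1) := by
  have hsqrt0 : Tendsto (fun ρ : ℝ => Real.sqrt ρ) atTop atTop := by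
    refine tendsto_atTop_atTop.2 fun b => ⟨max (b ^ 2) 0, fun x hx => ?_⟩
    calc b ≤ Real.sqrt (b ^ 2) := by
            rcases le_or_gt 0 b with h | h
            · rw [Real.sqrt_sq h]
            · exact h.le.trans (Real.sqrt_nonneg _)
      _ ≤ Real.sqrt x := Real.sqrt_le_sqrt ((le_max_left _ _).trans hx)
  have hsqrt : Tendsto (fun ρ : ℝ => 2 * Real.sqrt ρ) atTop atTop :=
    hsqrt0.const_mul_atTop two_pos
  have hu : Tendsto (fun ρ : ℝ => c / (2 * Real.sqrt ρ)) atTop (𝓝 0) :=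
    Tendsto.div_atTop tendsto_const_nhds hsqrt
  have hu' : Tendsto (fun ρ : ℝ => c / (2 * Real.sqrt ρ)) atTop (𝓝[≥] 0) := by
    rw [tendsto_nhdsWithin_iff]
    refine ⟨hu, ?_⟩
    filter_upwards [eventually_gt_atTop (0:ℝ)] with ρ hρ
    exact div_nonneg hc.le (by positivity)
  exact erfc_tendsto_zero_right.comp hu'

lemma levyDensity_nonneg (c : ℝ) (hc : 0 < c) {ρ : ℝ} (hρ : 0 ≤ ρ) : 0 ≤ levyDensity c ρ := by
  unfold levyDensity
  have h1 : (0:ℝ) ≤ ρ ^ (-(3:ℝ)/2) := Real.rpow_nonneg hρ _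
  have h2 : (0:ℝ) ≤ c / (2 * Real.sqrt Real.pi) := by positivity
  positivity

lemma integral_levy_Ioi (c : ℝ) (hc : 0 < c) {a : ℝ} (ha : 0 < a) :
    ∫ ρ in Ioi a, levyDensity c ρ = 1 - erfc (c / (2 * Real.sqrt a)) := by
  refine integral_Ioi_of_hasDerivAt_of_nonneg' (g := fun y => erfc (c / (2 * Real.sqrt y)))
    (fun x hx => G_hasDerivAt c hc (lt_of_lt_of_le ha hx)) ?_ (G_tendsto c hc)
  intro x hx
  exact levyDensity_nonneg c hc (le_of_lt (ha.trans hx))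

lemma integrableOn_levy_Ioi (c : ℝ) (hc : 0 < c) {a : ℝ} (ha : 0 < a) :
    IntegrableOn (fun ρ => levyDensity c ρ) (Ioi a) := by
  refine integrableOn_Ioi_deriv_of_nonneg' (g := fun y => erfc (c / (2 * Real.sqrt y)))
    (fun x hx => G_hasDerivAt c hc (lt_of_lt_of_le ha hx)) ?_ (G_tendsto c hc)
  intro x hx
  exact levyDensity_nonneg c hc (le_of_lt (ha.trans hx))

lemma expMeasure_Ioi_eq {r t : ℝ} (hr : 0 < r) (ht : 0 ≤ t) :
    expMeasure r (Ioi t) = ENNReal.ofReal (Real.exp (-(r * t))) := by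
  have h1 : expMeasure r (Ioi t) = ∫⁻ y in Ioi t, exponentialPDF r y := by
    rw [expMeasure, gammaMeasure, withDensity_apply _ measurableSet_Ioi]
    rfl
  rw [h1]
  have h2 : ∫⁻ y in Ioi t, exponentialPDF r y
      = ∫⁻ y in Ioi t, ENNReal.ofReal (r * Real.exp (-(r * y))) := by
    refine setLIntegral_congr_fun measurableSet_Ioi (fun y hy => ?_)
    exact exponentialPDF_of_nonneg (ht.trans (le_of_lt hy))
  rw [h2]
  have hint : IntegrableOn (fun y : ℝ => r * Real.exp (-(r * y))) (Ioi t) := by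
    have := (exp_neg_integrableOn_Ioi t hr).const_mul r
    simpa [neg_mul, IntegrableOn] using this
  rw [← ofReal_integral_eq_lintegral_ofReal hint
    (ae_of_all _ fun y => by positivity)]
  congr 1
  have hderiv : ∀ y ∈ Ici t, HasDerivAt (fun a => -Real.exp (-(r * a)))
      (r * Real.exp (-(r * y))) y := fun y _ => hasDerivAt_neg_exp_mul_exp
  have htend : Tendsto (fun y => -Real.exp (-(r * y))) atTop (𝓝 0) := by
    rw [show (0:ℝ) = -0 by simp]
    refine Tendsto.neg ?_
    refine Real.tendsto_exp_atBot.comp ?_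
    have : Tendsto (fun y : ℝ => r * y) atTop atTop :=
      Tendsto.const_mul_atTop hr tendsto_id
    exact tendsto_neg_atBot_iff.2 this
  have := integral_Ioi_of_hasDerivAt_of_tendsto'
    (f := fun a => -Real.exp (-(r * a))) (f' := fun y => r * Real.exp (-(r * y)))
    hderiv hint htend
  rw [this]
  ring

lemma measurable_levyDensity (c : ℝ) : Measurable (fun ρ => levyDensity c ρ) := by
  unfold levyDensity
  fun_prop

lemma erfc_nonneg (x : ℝ) : 0 ≤ erfc x := by
  unfold erfc
  refine mul_nonneg (by positivity) ?_
  refine setIntegral_nonneg measurableSet_Ioi fun t _ => (Real.exp_pos _).le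

lemma erfc_le_one {c x : ℝ} (hc : 0 < c) (hx : 0 < x) : erfc (c / (2 * Real.sqrt x)) ≤ 1 := by
  have h := integral_levy_Ioi c hc hx
  have hnn : 0 ≤ ∫ ρ in Ioi x, levyDensity c ρ :=
    setIntegral_nonneg measurableSet_Ioi fun t ht => levyDensity_nonneg c hc (le_of_lt (hx.trans ht))
  linarith

-- the law μ of X
lemma levy_measure_Ioi (c : ℝ) (hc : 0 < c) {t : ℝ} (ht : 0 < t) :
    ((volume.restrict (Ioi (0:ℝ))).withDensity fun ρ => ENNReal.ofReal (levyDensity c ρ))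
      (Ioi t) = ENNReal.ofReal (1 - erfc (c / (2 * Real.sqrt t))) := by
  rw [withDensity_apply _ measurableSet_Ioi, Measure.restrict_restrict measurableSet_Ioi]
  have hsub : Ioi t ∩ Ioi (0:ℝ) = Ioi t := by
    rw [inter_eq_left]
    exact fun y hy => ht.trans hy
  rw [hsub, ← ofReal_integral_eq_lintegral_ofReal (integrableOn_levy_Ioi c hc ht)
    (ae_restrict_of_forall_mem measurableSet_Ioi fun y hy =>
      levyDensity_nonneg c hc (le_of_lt (ht.trans hy))), integral_levy_Ioi c hc ht]

lemma levy_measure_Iic (c : ℝ) (hc : 0 < c) {t : ℝ} (ht : 0 < t)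
    (hprob : IsProbabilityMeasure
      ((volume.restrict (Ioi (0:ℝ))).withDensity fun ρ => ENNReal.ofReal (levyDensity c ρ))) :
    (((volume.restrict (Ioi (0:ℝ))).withDensity fun ρ => ENNReal.ofReal (levyDensity c ρ))
      (Iic t)).toReal = erfc (c / (2 * Real.sqrt t)) := by
  set μ := (volume.restrict (Ioi (0:ℝ))).withDensity fun ρ => ENNReal.ofReal (levyDensity c ρ)
  have hadd : μ (Iic t) + μ (Ioi t) = 1 := by
    rw [← measure_union (Iic_disjoint_Ioi le_rfl) measurableSet_Ioi, Iic_union_Ioi,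
      measure_univ]
  have hIoi : μ (Ioi t) = ENNReal.ofReal (1 - erfc (c / (2 * Real.sqrt t))) :=
    levy_measure_Ioi c hc ht
  have he0 : 0 ≤ erfc (c / (2 * Real.sqrt t)) := erfc_nonneg _
  have he1 : erfc (c / (2 * Real.sqrt t)) ≤ 1 := erfc_le_one hc ht
  have hIic : μ (Iic t) = ENNReal.ofReal (erfc (c / (2 * Real.sqrt t))) := by
    have hfin : μ (Ioi t) ≤ 1 := le_of_le_of_eq (le_add_self) hadd
    rw [hIoi] at hadd
    have : ENNReal.ofReal (erfc (c / (2 * Real.sqrt t))) +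
        ENNReal.ofReal (1 - erfc (c / (2 * Real.sqrt t))) = 1 := by
      rw [← ENNReal.ofReal_add he0 (by linarith)]
      norm_num
    have hne : ENNReal.ofReal (1 - erfc (c / (2 * Real.sqrt t))) ≠ ⊤ := ENNReal.ofReal_ne_top
    exact ((ENNReal.cancel_of_ne hne).inj_left).1 (hadd.trans this.symm)
  rw [hIic, ENNReal.toReal_ofReal he0]

/-- Energy outage probability under STP in the PPP/Rayleigh/μ=4 special case:
with `X` of density `f_c` on `(0,∞)`, `h` exponential with rate `λ > 0`
independent of `X`, `K > 0`, `a, b > 0`, and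
`B = P[h > K/X and X > a]`,
`O_STP = B·P[X ≤ a] + (1 − B)·P[X ≤ b]
       = (∫_a^∞ exp(−λK/ρ)·f_c(ρ) dρ)·(erfc(c/(2√a)) − erfc(c/(2√b))) + erfc(c/(2√b))`. -/
theorem energy_outage_STP {Ω : Type*} [MeasurableSpace Ω]
    (P : Measure Ω) [IsProbabilityMeasure P]
    (c : ℝ) (hc : 0 < c) (X h : Ω → ℝ) (hXm : Measurable X) (hhm : Measurable h)
    (lam : ℝ) (hlam : 0 < lam)
    (hXlaw : Measure.map X P =
      (volume.restrict (Ioi (0 : ℝ))).withDensity fun ρ => ENNReal.ofReal (levyDensity c ρ))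
    (hhlaw : Measure.map h P = expMeasure lam)
    (hind : IndepFun X h P)
    (K : ℝ) (hK : 0 < K) (a b : ℝ) (ha : 0 < a) (hb : 0 < b) :
    (P {x | h x > K / X x ∧ X x > a}).toReal * (P {x | X x ≤ a}).toReal +
        (1 - (P {x | h x > K / X x ∧ X x > a}).toReal) * (P {x | X x ≤ b}).toReal =
      (∫ ρ in Ioi a, Real.exp (-(lam * K / ρ)) * levyDensity c ρ) *
          (erfc (c / (2 * Real.sqrt a)) - erfc (c / (2 * Real.sqrt b))) +
        erfc (c / (2 * Real.sqrt b)) := by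
  set μ := (volume.restrict (Ioi (0:ℝ))).withDensity fun ρ => ENNReal.ofReal (levyDensity c ρ)
    with hμ
  have hprob : IsProbabilityMeasure μ := hXlaw ▸ Measure.isProbabilityMeasure_map hXm.aemeasurable
  -- CDF values
  have hcdf : ∀ t : ℝ, 0 < t → (P {x | X x ≤ t}).toReal = erfc (c / (2 * Real.sqrt t)) := by
    intro t ht
    have : P {x | X x ≤ t} = μ (Iic t) := by
      rw [← hXlaw, Measure.map_apply hXm measurableSet_Iic]
      rfl
    rw [this, levy_measure_Iic c hc ht hprob]
  -- the joint law
  set ν := expMeasure lam with hν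
  have hjoint : Measure.map (fun ω => (X ω, h ω)) P = μ.prod ν := by
    rw [← hXlaw, ← hhlaw]
    exact (indepFun_iff_map_prod_eq_prod_map_map hXm.aemeasurable hhm.aemeasurable).1 hind
  set S : Set (ℝ × ℝ) := {p : ℝ × ℝ | K / p.1 < p.2 ∧ a < p.1} with hSdef
  have hS : MeasurableSet S :=
    (measurableSet_lt (measurable_const.div measurable_fst) measurable_snd).inter
      (measurableSet_lt measurable_const measurable_fst)
  have hPB : P {x | h x > K / X x ∧ X x > a} = (μ.prod ν) S := by
    rw [← hjoint, Measure.map_apply (hXm.prodMk hhm) hS]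
    rfl
  have hνprob : IsProbabilityMeasure ν := isProbabilityMeasure_expMeasure hlam
  have hsect : ∀ x : ℝ, ν (Prod.mk x ⁻¹' S)
      = indicator (Ioi a) (fun x => ENNReal.ofReal (Real.exp (-(lam * K / x)))) x := by
    intro x
    by_cases hx : a < x
    · have hpre : Prod.mk x ⁻¹' S = Ioi (K / x) := by
        ext y; simp [hSdef, hx, Ioi]
      rw [hpre, hν, expMeasure_Ioi_eq hlam (le_of_lt (div_pos hK (ha.trans hx)))]
      simp [Set.indicator, hx, mul_div_assoc]
    · have hpre : Prod.mk x ⁻¹' S = ∅ := by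
        ext y; simp [hSdef, hx]
      rw [hpre, measure_empty]
      simp [Set.indicator, hx]
  have hmeas_ind : Measurable (indicator (Ioi a)
      (fun x : ℝ => ENNReal.ofReal (Real.exp (-(lam * K / x))))) := by
    refine Measurable.indicator ?_ measurableSet_Ioi
    fun_prop
  have hprod : (μ.prod ν) S
      = ∫⁻ x in Ioi a, ENNReal.ofReal (levyDensity c x)
          * ENNReal.ofReal (Real.exp (-(lam * K / x))) := by
    rw [Measure.prod_apply hS]
    calc ∫⁻ x, ν (Prod.mk x ⁻¹' S) ∂μ
        = ∫⁻ x, indicator (Ioi a)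
            (fun x => ENNReal.ofReal (Real.exp (-(lam * K / x)))) x ∂μ := by
          exact lintegral_congr hsect
      _ = ∫⁻ x in Ioi (0:ℝ), ENNReal.ofReal (levyDensity c x)
            * indicator (Ioi a) (fun x => ENNReal.ofReal (Real.exp (-(lam * K / x)))) x := by
          rw [hμ, lintegral_withDensity_eq_lintegral_mul _
            ((measurable_levyDensity c).ennreal_ofReal) hmeas_ind]
          rfl
      _ = ∫⁻ x in Ioi (0:ℝ), indicator (Ioi a)
            (fun x => ENNReal.ofReal (levyDensity c x)
              * ENNReal.ofReal (Real.exp (-(lam * K / x)))) x := by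
          refine lintegral_congr fun x => ?_
          by_cases hx : a < x
          · simp [Set.indicator, hx]
          · simp [Set.indicator, hx]
      _ = _ := by
          rw [lintegral_indicator measurableSet_Ioi, Measure.restrict_restrict measurableSet_Ioi,
            show Ioi a ∩ Ioi (0:ℝ) = Ioi a from inter_eq_left.2 fun y hy => ha.trans hy]
  have hIntB : IntegrableOn (fun x => Real.exp (-(lam * K / x)) * levyDensity c x) (Ioi a) := by
    refine Integrable.mono (integrableOn_levy_Ioi c hc ha) ?_ ?_
    · refine Measurable.aestronglyMeasurable ?_
      have : Measurable fun x : ℝ => Real.exp (-(lam * K / x)) := by fun_prop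
      exact this.mul (measurable_levyDensity c)
    · refine ae_restrict_of_forall_mem measurableSet_Ioi fun x hx => ?_
      have hx0 : 0 < x := ha.trans hx
      have h1 : 0 ≤ levyDensity c x := levyDensity_nonneg c hc hx0.le
      have h2 : Real.exp (-(lam * K / x)) ≤ 1 := by
        rw [Real.exp_le_one_iff]
        have : 0 < lam * K / x := by positivity
        linarith
      have h3 : 0 ≤ Real.exp (-(lam * K / x)) := (Real.exp_pos _).le
      rw [Real.norm_eq_abs, Real.norm_eq_abs, abs_of_nonneg (mul_nonneg h3 h1),
        abs_of_nonneg h1]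
      nlinarith
  have hBint : (μ.prod ν) S
      = ENNReal.ofReal (∫ x in Ioi a, Real.exp (-(lam * K / x)) * levyDensity c x) := by
    have hpt : ∫⁻ x in Ioi a, ENNReal.ofReal (levyDensity c x)
        * ENNReal.ofReal (Real.exp (-(lam * K / x)))
        = ∫⁻ x in Ioi a, ENNReal.ofReal (Real.exp (-(lam * K / x)) * levyDensity c x) := by
      refine setLIntegral_congr_fun measurableSet_Ioi (fun x hx => ?_)
      rw [ENNReal.ofReal_mul (Real.exp_pos _).le]
      exact mul_comm _ _
    rw [hprod, hpt, ← ofReal_integral_eq_lintegral_ofReal hIntB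
      (ae_restrict_of_forall_mem measurableSet_Ioi fun x hx =>
        mul_nonneg (Real.exp_pos _).le (levyDensity_nonneg c hc (ha.trans hx).le))]
  have hBr : (P {x | h x > K / X x ∧ X x > a}).toReal
      = ∫ x in Ioi a, Real.exp (-(lam * K / x)) * levyDensity c x := by
    rw [hPB, hBint, ENNReal.toReal_ofReal]
    exact setIntegral_nonneg measurableSet_Ioi fun x hx =>
      mul_nonneg (Real.exp_pos _).le (levyDensity_nonneg c hc (ha.trans hx).le)
  rw [hBr, hcdf a ha, hcdf b hb]
  ring
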